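/- arXiv:1209.2069 — 4 statements merged into one kernel-verified Lean document; each statement's English description precedes it below -/
import Mathlib

section
/- Let l > 0 and let u : ℝ → ℝ be continuously differentiable on [0, l]. Then ( sup_{t∈[0,l]} |u(t)| )² ≤ coth(l) · ∫₀^l ( u(t)² + u'(t)² ) dt, where coth(l) = cosh(l)/sinh(l). -/
open Real intervalIntegral Set

lemma continuous_tanh' : Continuous Real.tanh := by
  have : Real.tanh = fun y => Real.sinh y / Real.cosh y :=
    funext fun y => Real.tanh_eq_sinh_div_cosh y
  rw [this]
  exact Real.continuous_sinh.div Real.continuous_cosh fun x => (Real.cosh_pos x).ne'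

lemma tanh_sq_le_one' (x : ℝ) : Real.tanh x ^ 2 ≤ 1 := by
  rw [Real.tanh_eq_sinh_div_cosh, div_pow, div_le_one (pow_pos (Real.cosh_pos x) 2)]
  nlinarith [Real.cosh_sq_sub_sinh_sq x]

lemma tanh_hasDerivAt' (x : ℝ) : HasDerivAt Real.tanh (1 - Real.tanh x ^ 2) x := by
  have hc : Real.cosh x ≠ 0 := (Real.cosh_pos x).ne'
  have h := (Real.hasDerivAt_sinh x).div (Real.hasDerivAt_cosh x) hc
  have heq : 1 - Real.tanh x ^ 2
      = (Real.cosh x * Real.cosh x - Real.sinh x * Real.sinh x) / Real.cosh x ^ 2 := by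
    rw [Real.tanh_eq_sinh_div_cosh]
    field_simp
  have hfun : Real.tanh = fun y => Real.sinh y / Real.cosh y :=
    funext fun y => Real.tanh_eq_sinh_div_cosh y
  rw [heq, hfun]
  exact h

lemma tanh_nonneg' {x : ℝ} (hx : 0 ≤ x) : 0 ≤ Real.tanh x := by
  rw [Real.tanh_eq_sinh_div_cosh]
  exact div_nonneg (Real.sinh_nonneg_iff.2 hx) (Real.cosh_pos x).le

lemma tanh_subadd {a b : ℝ} (ha : 0 ≤ a) (hb : 0 ≤ b) :
    Real.tanh (a + b) ≤ Real.tanh a + Real.tanh b := by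
  have hca := Real.cosh_pos a
  have hcb := Real.cosh_pos b
  have hcab := Real.cosh_pos (a + b)
  have hsa : 0 ≤ Real.sinh a := Real.sinh_nonneg_iff.2 ha
  have hsb : 0 ≤ Real.sinh b := Real.sinh_nonneg_iff.2 hb
  rw [Real.tanh_eq_sinh_div_cosh, Real.tanh_eq_sinh_div_cosh, Real.tanh_eq_sinh_div_cosh,
    div_add_div _ _ hca.ne' hcb.ne', div_le_div_iff₀ hcab (mul_pos hca hcb)]
  rw [Real.sinh_add, Real.cosh_add]
  nlinarith [mul_nonneg (mul_nonneg hsa hsb)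
    (add_nonneg (mul_nonneg hsa hcb.le) (mul_nonneg hca.le hsb))]

/-- FTC-based bound at the right endpoint. -/
lemma sob_right (a b : ℝ) (hab : a ≤ b) (u u' : ℝ → ℝ)
    (hderiv : ∀ t ∈ Set.Icc a b, HasDerivAt u (u' t) t)
    (hcont : ContinuousOn u' (Set.Icc a b)) :
    u b ^ 2 * Real.tanh (b - a) ≤ ∫ t in a..b, (u t ^ 2 + u' t ^ 2) := by
  have hIcc : Set.uIcc a b = Set.Icc a b := Set.uIcc_of_le hab
  have hu : ContinuousOn u (Set.Icc a b) := fun t ht =>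
    (hderiv t ht).continuousAt.continuousWithinAt
  set F' : ℝ → ℝ := fun t =>
    2 * u t * u' t * Real.tanh (t - a) + u t ^ 2 * (1 - Real.tanh (t - a) ^ 2) with hF'
  have hFd : ∀ t ∈ Set.uIcc a b,
      HasDerivAt (fun t => u t ^ 2 * Real.tanh (t - a)) (F' t) t := by
    intro t ht
    rw [hIcc] at ht
    have h1 : HasDerivAt (fun t => u t ^ 2) (2 * u t * u' t) t := by
      exact ((hderiv t ht).pow 2).congr_deriv (by norm_num)
    have h2 : HasDerivAt (fun t => Real.tanh (t - a)) (1 - Real.tanh (t - a) ^ 2) t := by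
      refine ((tanh_hasDerivAt' (t - a)).comp t ((hasDerivAt_id t).sub_const a)).congr_deriv ?_
      ring
    exact (h1.mul h2).congr_deriv (by simp only [hF'])
  have hFc : ContinuousOn F' (Set.Icc a b) := by
    apply ContinuousOn.add
    · exact (((continuousOn_const.mul hu).mul hcont).mul
        ((continuous_tanh'.comp (continuous_id.sub continuous_const)).continuousOn))
    · exact (hu.pow 2).mul (continuousOn_const.sub
        (((continuous_tanh'.comp (continuous_id.sub continuous_const)).continuousOn).pow 2))
  have hFint : IntervalIntegrable F' MeasureTheory.volume a b :=
    (hFc.mono (by rw [hIcc])).intervalIntegrable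
  have hSint : IntervalIntegrable (fun t => u t ^ 2 + u' t ^ 2) MeasureTheory.volume a b :=
    (((hu.pow 2).add (hcont.pow 2)).mono (by rw [hIcc])).intervalIntegrable
  have hFTC := intervalIntegral.integral_eq_sub_of_hasDerivAt hFd hFint
  have hmono : (∫ t in a..b, F' t) ≤ ∫ t in a..b, (u t ^ 2 + u' t ^ 2) := by
    apply intervalIntegral.integral_mono_on hab hFint hSint
    intro t ht
    have hT : Real.tanh (t - a) ^ 2 ≤ 1 := tanh_sq_le_one' (t - a)
    simp only [hF']
    nlinarith [sq_nonneg (u t * Real.tanh (t - a) - u' t)]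
  calc u b ^ 2 * Real.tanh (b - a)
      = ∫ t in a..b, F' t := by rw [hFTC]; simp
    _ ≤ _ := hmono

/-- FTC-based bound at the left endpoint. -/
lemma sob_left (a b : ℝ) (hab : a ≤ b) (u u' : ℝ → ℝ)
    (hderiv : ∀ t ∈ Set.Icc a b, HasDerivAt u (u' t) t)
    (hcont : ContinuousOn u' (Set.Icc a b)) :
    u a ^ 2 * Real.tanh (b - a) ≤ ∫ t in a..b, (u t ^ 2 + u' t ^ 2) := by
  have hIcc : Set.uIcc a b = Set.Icc a b := Set.uIcc_of_le hab
  have hu : ContinuousOn u (Set.Icc a b) := fun t ht =>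
    (hderiv t ht).continuousAt.continuousWithinAt
  set G' : ℝ → ℝ := fun t =>
    2 * u t * u' t * Real.tanh (b - t) - u t ^ 2 * (1 - Real.tanh (b - t) ^ 2) with hG'
  have hGd : ∀ t ∈ Set.uIcc a b,
      HasDerivAt (fun t => u t ^ 2 * Real.tanh (b - t)) (G' t) t := by
    intro t ht
    rw [hIcc] at ht
    have h1 : HasDerivAt (fun t => u t ^ 2) (2 * u t * u' t) t := by
      exact ((hderiv t ht).pow 2).congr_deriv (by norm_num)
    have h2 : HasDerivAt (fun t => Real.tanh (b - t)) (-(1 - Real.tanh (b - t) ^ 2)) t := by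
      exact ((tanh_hasDerivAt' (b - t)).comp t ((hasDerivAt_id t).const_sub b)).congr_deriv (by ring)
    have := h1.mul h2
    refine this.congr_deriv ?_
    simp [hG']; ring
  have hGc : ContinuousOn G' (Set.Icc a b) := by
    apply ContinuousOn.sub
    · exact (((continuousOn_const.mul hu).mul hcont).mul
        ((continuous_tanh'.comp (continuous_const.sub continuous_id)).continuousOn))
    · exact (hu.pow 2).mul (continuousOn_const.sub
        (((continuous_tanh'.comp (continuous_const.sub continuous_id)).continuousOn).pow 2))
  have hGint : IntervalIntegrable G' MeasureTheory.volume a b :=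
    (hGc.mono (by rw [hIcc])).intervalIntegrable
  have hSint : IntervalIntegrable (fun t => u t ^ 2 + u' t ^ 2) MeasureTheory.volume a b :=
    (((hu.pow 2).add (hcont.pow 2)).mono (by rw [hIcc])).intervalIntegrable
  have hFTC := intervalIntegral.integral_eq_sub_of_hasDerivAt hGd hGint
  have hmono : (∫ t in a..b, -G' t) ≤ ∫ t in a..b, (u t ^ 2 + u' t ^ 2) := by
    apply intervalIntegral.integral_mono_on hab hGint.neg hSint
    intro t ht
    have hT : Real.tanh (b - t) ^ 2 ≤ 1 := tanh_sq_le_one' (b - t)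
    simp only [hG', Pi.neg_apply]
    nlinarith [sq_nonneg (u t * Real.tanh (b - t) + u' t)]
  calc u a ^ 2 * Real.tanh (b - a)
      = ∫ t in a..b, -G' t := by
        rw [intervalIntegral.integral_neg, hFTC]; simp
    _ ≤ _ := hmono

/-- Sharp one-dimensional Sobolev embedding
`W^{1,2}((0,l)) ⊂ C([0,l])`: for `u` continuously differentiable on `[0, l]`,
`(sup_{[0,l]} |u|)² ≤ coth(l) · ∫₀^l (u² + (u')²)`. -/
theorem stmt_5 (l : ℝ) (hl : 0 < l) (u u' : ℝ → ℝ)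
    (hderiv : ∀ t ∈ Set.Icc 0 l, HasDerivAt u (u' t) t)
    (hcont : ContinuousOn u' (Set.Icc 0 l)) :
    (⨆ t : Set.Icc 0 l, |u t|) ^ 2 ≤
      Real.cosh l / Real.sinh l * ∫ t in (0:ℝ)..l, (u t ^ 2 + u' t ^ 2) := by
  have hsinh : 0 < Real.sinh l := by
    rw [← Real.sinh_zero]; exact Real.sinh_lt_sinh.2 hl
  have hcosh : 0 < Real.cosh l := Real.cosh_pos l
  set I : ℝ := ∫ t in (0:ℝ)..l, (u t ^ 2 + u' t ^ 2) with hI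
  -- pointwise bound
  have key : ∀ t₀ ∈ Set.Icc (0:ℝ) l, u t₀ ^ 2 ≤ Real.cosh l / Real.sinh l * I := by
    intro t₀ ht₀
    obtain ⟨h0, h1⟩ := ht₀
    have hL := sob_right 0 t₀ h0 u u'
      (fun t ht => hderiv t ⟨ht.1, ht.2.trans h1⟩)
      (hcont.mono (Set.Icc_subset_Icc le_rfl h1))
    have hR := sob_left t₀ l h1 u u'
      (fun t ht => hderiv t ⟨h0.trans ht.1, ht.2⟩)
      (hcont.mono (Set.Icc_subset_Icc h0 le_rfl))
    have hsplit : (∫ t in (0:ℝ)..t₀, (u t ^ 2 + u' t ^ 2)) +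
        (∫ t in t₀..l, (u t ^ 2 + u' t ^ 2)) = I := by
      have hu : ContinuousOn u (Set.Icc 0 l) := fun t ht =>
        (hderiv t ht).continuousAt.continuousWithinAt
      have hc : ContinuousOn (fun t => u t ^ 2 + u' t ^ 2) (Set.Icc 0 l) :=
        (hu.pow 2).add (hcont.pow 2)
      have i1 : IntervalIntegrable (fun t => u t ^ 2 + u' t ^ 2) MeasureTheory.volume 0 t₀ :=
        (hc.mono (by rw [Set.uIcc_of_le h0]; exact Set.Icc_subset_Icc le_rfl h1)).intervalIntegrable
      have i2 : IntervalIntegrable (fun t => u t ^ 2 + u' t ^ 2) MeasureTheory.volume t₀ l :=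
        (hc.mono (by rw [Set.uIcc_of_le h1]; exact Set.Icc_subset_Icc h0 le_rfl)).intervalIntegrable
      exact intervalIntegral.integral_add_adjacent_intervals i1 i2
    have hsub : Real.tanh l ≤ Real.tanh t₀ + Real.tanh (l - t₀) := by
      have := tanh_subadd h0 (sub_nonneg.2 h1)
      simpa using this
    have hkey : u t₀ ^ 2 * Real.tanh l ≤ I := by
      calc u t₀ ^ 2 * Real.tanh l
          ≤ u t₀ ^ 2 * (Real.tanh t₀ + Real.tanh (l - t₀)) := by
            exact mul_le_mul_of_nonneg_left hsub (sq_nonneg _)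
        _ = u t₀ ^ 2 * Real.tanh (t₀ - 0) + u t₀ ^ 2 * Real.tanh (l - t₀) := by ring_nf
        _ ≤ (∫ t in (0:ℝ)..t₀, (u t ^ 2 + u' t ^ 2)) +
            (∫ t in t₀..l, (u t ^ 2 + u' t ^ 2)) := add_le_add hL hR
        _ = I := hsplit
    rw [Real.tanh_eq_sinh_div_cosh] at hkey
    rw [div_mul_eq_mul_div, le_div_iff₀ hsinh]
    calc u t₀ ^ 2 * Real.sinh l = (u t₀ ^ 2 * (Real.sinh l / Real.cosh l)) * Real.cosh l := by
          field_simp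
      _ ≤ I * Real.cosh l := mul_le_mul_of_nonneg_right hkey hcosh.le
      _ = Real.cosh l * I := mul_comm _ _
  -- nonnegativity of RHS
  have hInn : 0 ≤ Real.cosh l / Real.sinh l * I :=
    le_trans (sq_nonneg (u 0)) (key 0 ⟨le_rfl, hl.le⟩)
  -- sup bound
  have hne : Nonempty (Set.Icc (0:ℝ) l) := ⟨⟨0, le_rfl, hl.le⟩⟩
  have hsup : (⨆ t : Set.Icc 0 l, |u t|) ≤ Real.sqrt (Real.cosh l / Real.sinh l * I) := by
    apply ciSup_le
    intro ⟨t, ht⟩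
    have := key t ht
    have h2 : |u t| ^ 2 ≤ Real.cosh l / Real.sinh l * I := by
      rwa [sq_abs]
    calc |u t| = Real.sqrt (|u t| ^ 2) := by rw [Real.sqrt_sq (abs_nonneg _)]
      _ ≤ Real.sqrt (Real.cosh l / Real.sinh l * I) := Real.sqrt_le_sqrt h2
  have hbdd : BddAbove (Set.range fun t : Set.Icc 0 l => |u t|) := by
    refine ⟨Real.sqrt (Real.cosh l / Real.sinh l * I), ?_⟩
    rintro x ⟨⟨t, ht⟩, rfl⟩
    have h2 : |u t| ^ 2 ≤ Real.cosh l / Real.sinh l * I := by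
      simpa [sq_abs] using key t ht
    calc |u t| = Real.sqrt (|u t| ^ 2) := (Real.sqrt_sq (abs_nonneg _)).symm
      _ ≤ _ := Real.sqrt_le_sqrt h2
  have hnn : 0 ≤ ⨆ t : Set.Icc 0 l, |u t| :=
    le_trans (abs_nonneg (u 0)) (le_ciSup hbdd (⟨0, le_rfl, hl.le⟩ : Set.Icc (0:ℝ) l))
  calc (⨆ t : Set.Icc 0 l, |u t|) ^ 2
      ≤ Real.sqrt (Real.cosh l / Real.sinh l * I) ^ 2 := by
        exact pow_le_pow_left₀ hnn hsup 2
    _ = Real.cosh l / Real.sinh l * I := Real.sq_sqrt hInn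
end

section
/- Let l > 0 and let u : ℝ → ℝ be continuously differentiable on [0, l]. Then u(0)² + u(l)² ≤ 2·coth(l) · ∫₀^l ( u(t)² + u'(t)² ) dt, where coth(l) = cosh(l)/sinh(l). -/
open Real intervalIntegral

private lemma sinh_comp_deriv (l t : ℝ) :
    HasDerivAt (fun s => Real.sinh (l - s)) (-Real.cosh (l - t)) t := by
  have h := (Real.hasDerivAt_sinh (l - t)).comp t
    ((hasDerivAt_const t l).sub (hasDerivAt_id t))
  simpa [Function.comp_def] using h

private lemma cosh_comp_deriv (l t : ℝ) :
    HasDerivAt (fun s => Real.cosh (l - s)) (-Real.sinh (l - t)) t := by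
  have h := (Real.hasDerivAt_cosh (l - t)).comp t
    ((hasDerivAt_const t l).sub (hasDerivAt_id t))
  simpa [Function.comp_def] using h

private lemma aux_endpoint (l : ℝ) (hl : 0 < l) (u u' : ℝ → ℝ)
    (hderiv : ∀ t ∈ Set.Icc 0 l, HasDerivAt u (u' t) t)
    (hcont : ContinuousOn u' (Set.Icc 0 l)) :
    u 0 ^ 2 * Real.sinh l ≤
      Real.cosh l * ∫ t in (0:ℝ)..l, (u t ^ 2 + u' t ^ 2) := by
  have hle : (0:ℝ) ≤ l := hl.le
  have huIcc : Set.uIcc (0:ℝ) l = Set.Icc 0 l := Set.uIcc_of_le hle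
  have hucont : ContinuousOn u (Set.Icc 0 l) := fun t ht =>
    (hderiv t ht).continuousAt.continuousWithinAt
  have hcoshl : (0:ℝ) < Real.cosh l := Real.cosh_pos l
  set a := u 0 with ha
  -- FTC identity: ∫ (u' sinh(l-t) - u cosh(l-t)) = -a sinh l
  have hF : ∀ t ∈ Set.uIcc (0:ℝ) l,
      HasDerivAt (fun s => u s * Real.sinh (l - s))
        (u' t * Real.sinh (l - t) - u t * Real.cosh (l - t)) t := by
    intro t ht
    rw [huIcc] at ht
    have := (hderiv t ht).mul (sinh_comp_deriv l t)
    simpa [mul_comm, sub_eq_add_neg, mul_neg, Pi.mul_def] using this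
  have hintF : IntervalIntegrable
      (fun t => u' t * Real.sinh (l - t) - u t * Real.cosh (l - t))
      MeasureTheory.volume 0 l := by
    apply ContinuousOn.intervalIntegrable
    rw [huIcc]
    exact (hcont.mul ((Real.continuous_sinh.comp (continuous_const.sub
      continuous_id)).continuousOn)).sub
      (hucont.mul ((Real.continuous_cosh.comp (continuous_const.sub
      continuous_id)).continuousOn))
  have hid1 : (∫ t in (0:ℝ)..l,
      (u' t * Real.sinh (l - t) - u t * Real.cosh (l - t))) = -(a * Real.sinh l) := by
    rw [intervalIntegral.integral_eq_sub_of_hasDerivAt hF hintF]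
    simp [ha]
  -- FTC identity: ∫ (cosh(l-t)^2 + sinh(l-t)^2) = sinh l * cosh l
  have hG : ∀ t ∈ Set.uIcc (0:ℝ) l,
      HasDerivAt (fun s => -(Real.sinh (l - s) * Real.cosh (l - s)))
        (Real.cosh (l - t) ^ 2 + Real.sinh (l - t) ^ 2) t := by
    intro t ht
    have := ((sinh_comp_deriv l t).mul (cosh_comp_deriv l t)).neg
    refine this.congr_deriv ?_
    ring
  have hintG : IntervalIntegrable
      (fun t => Real.cosh (l - t) ^ 2 + Real.sinh (l - t) ^ 2)
      MeasureTheory.volume 0 l := by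
    apply ContinuousOn.intervalIntegrable
    exact (((Real.continuous_cosh.comp (continuous_const.sub continuous_id)).pow 2).add
      ((Real.continuous_sinh.comp (continuous_const.sub continuous_id)).pow 2)).continuousOn
  have hid2 : (∫ t in (0:ℝ)..l,
      (Real.cosh (l - t) ^ 2 + Real.sinh (l - t) ^ 2)) = Real.sinh l * Real.cosh l := by
    rw [intervalIntegral.integral_eq_sub_of_hasDerivAt hG hintG]
    simp
  -- pointwise inequality and integration
  have hint2 : IntervalIntegrable (fun t => u t ^ 2 + u' t ^ 2)
      MeasureTheory.volume 0 l := by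
    apply ContinuousOn.intervalIntegrable
    rw [huIcc]
    exact (hucont.pow 2).add (hcont.pow 2)
  have hmono : (∫ t in (0:ℝ)..l,
      (2 * Real.cosh l * a) * (u t * Real.cosh (l - t) - u' t * Real.sinh (l - t)))
      ≤ ∫ t in (0:ℝ)..l,
      (a ^ 2 * (Real.cosh (l - t) ^ 2 + Real.sinh (l - t) ^ 2)
        + Real.cosh l ^ 2 * (u t ^ 2 + u' t ^ 2)) := by
    apply intervalIntegral.integral_mono_on hle
    · apply ContinuousOn.intervalIntegrable
      rw [huIcc]
      exact continuousOn_const.mul ((hucont.mul ((Real.continuous_cosh.comp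
        (continuous_const.sub continuous_id)).continuousOn)).sub
        (hcont.mul ((Real.continuous_sinh.comp (continuous_const.sub
        continuous_id)).continuousOn)))
    · exact (hintG.const_mul _).add (hint2.const_mul _)
    · intro t _
      nlinarith [sq_nonneg (a * Real.cosh (l - t) - Real.cosh l * u t),
        sq_nonneg (a * Real.sinh (l - t) + Real.cosh l * u' t)]
  rw [intervalIntegral.integral_const_mul, intervalIntegral.integral_add
      (hintG.const_mul _) (hint2.const_mul _),
    intervalIntegral.integral_const_mul, intervalIntegral.integral_const_mul, hid2] at hmono
  have hneg : (∫ t in (0:ℝ)..l, (u t * Real.cosh (l - t) - u' t * Real.sinh (l - t)))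
      = a * Real.sinh l := by
    have := hintF.neg
    rw [show (fun t => u t * Real.cosh (l - t) - u' t * Real.sinh (l - t))
        = (fun t => -((fun s => u' s * Real.sinh (l - s) - u s * Real.cosh (l - s)) t)) by
        funext t; ring, intervalIntegral.integral_neg, hid1]
    ring
  rw [hneg] at hmono
  nlinarith [hmono, hcoshl]

/-- Endpoint estimate from the sharp Sobolev embedding: for `u`
continuously differentiable on `[0, l]`,
`u(0)² + u(l)² ≤ 2·coth(l) · ∫₀^l (u² + (u')²)`. -/
theorem stmt_6 (l : ℝ) (hl : 0 < l) (u u' : ℝ → ℝ)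
    (hderiv : ∀ t ∈ Set.Icc 0 l, HasDerivAt u (u' t) t)
    (hcont : ContinuousOn u' (Set.Icc 0 l)) :
    u 0 ^ 2 + u l ^ 2 ≤
      2 * (Real.cosh l / Real.sinh l) * ∫ t in (0:ℝ)..l, (u t ^ 2 + u' t ^ 2) := by
  have hsinh : (0:ℝ) < Real.sinh l := Real.sinh_pos_iff.mpr hl
  have h1 := aux_endpoint l hl u u' hderiv hcont
  -- reflected function
  set v : ℝ → ℝ := fun t => u (l - t) with hv
  set v' : ℝ → ℝ := fun t => -u' (l - t) with hv'
  have hderiv2 : ∀ t ∈ Set.Icc 0 l, HasDerivAt v (v' t) t := by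
    intro t ht
    have hmem : l - t ∈ Set.Icc 0 l := by
      constructor <;> [linarith [ht.2]; linarith [ht.1]]
    have := (hderiv (l - t) hmem).comp t ((hasDerivAt_const t l).sub (hasDerivAt_id t))
    simpa [hv, hv', Function.comp_def] using this
  have hcont2 : ContinuousOn v' (Set.Icc 0 l) := by
    apply ContinuousOn.neg
    apply hcont.comp (continuous_const.sub continuous_id).continuousOn
    intro t ht
    obtain ⟨h1, h2⟩ := ht
    simp only [Pi.sub_apply, id_eq]
    constructor <;> linarith
  have h2 := aux_endpoint l hl v v' hderiv2 hcont2
  have heq : (∫ t in (0:ℝ)..l, (v t ^ 2 + v' t ^ 2))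
      = ∫ t in (0:ℝ)..l, (u t ^ 2 + u' t ^ 2) := by
    have h := intervalIntegral.integral_comp_sub_left (a := (0:ℝ)) (b := l)
      (fun s => u s ^ 2 + u' s ^ 2) l
    simp only [sub_zero, sub_self] at h
    calc (∫ t in (0:ℝ)..l, (v t ^ 2 + v' t ^ 2))
        = ∫ t in (0:ℝ)..l, (u (l - t) ^ 2 + u' (l - t) ^ 2) := by
          apply intervalIntegral.integral_congr
          intro t _
          simp [hv, hv']
      _ = ∫ t in (0:ℝ)..l, (u t ^ 2 + u' t ^ 2) := h
  have hv0 : v 0 = u l := by simp [hv]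
  rw [heq, hv0] at h2
  have key : (u 0 ^ 2 + u l ^ 2) * Real.sinh l
      ≤ 2 * Real.cosh l * ∫ t in (0:ℝ)..l, (u t ^ 2 + u' t ^ 2) := by linarith
  calc u 0 ^ 2 + u l ^ 2
      = ((u 0 ^ 2 + u l ^ 2) * Real.sinh l) / Real.sinh l := by field_simp
    _ ≤ (2 * Real.cosh l * ∫ t in (0:ℝ)..l, (u t ^ 2 + u' t ^ 2)) / Real.sinh l := by
        gcongr
    _ = 2 * (Real.cosh l / Real.sinh l) * ∫ t in (0:ℝ)..l, (u t ^ 2 + u' t ^ 2) := by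
        ring
end

section
/- Let ω > 0, l > 0 and a, b ∈ ℝ, and let w(t) = a + ((b − a)/l)·t be the linear interpolation on [0, l] with w(0) = a, w(l) = b. Then ω·l·∫₀^l ( w(t)² + w'(t)² ) dt ≤ ω·(a − b)² + (ω·l²/2)·(a² + b²). In particular, ω·l·∫₀^l w'(t)² dt = ω·(a − b)². -/
theorem poly_integral (p q r l : ℝ) :
    ∫ t in (0:ℝ)..l, (p + q*t + r*t^2) = p*l + q*l^2/2 + r*l^3/3 := by
  rw [intervalIntegral.integral_add
      ((by continuity : Continuous fun t : ℝ => p + q*t).intervalIntegrable _ _)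
      ((by continuity : Continuous fun t : ℝ => r*t^2).intervalIntegrable _ _),
    intervalIntegral.integral_add
      ((by continuity : Continuous fun _ : ℝ => p).intervalIntegrable _ _)
      ((by continuity : Continuous fun t : ℝ => q*t).intervalIntegrable _ _),
    intervalIntegral.integral_const_mul, intervalIntegral.integral_const_mul]
  simp [integral_id]
  ring

/-- For the linear interpolation `w(t) = a + ((b−a)/l)·t` on `[0, l]`
and an edge weight `ω > 0`, the edge `W^{1,2}`-norm of `w` is dominated by the graph
energy contribution: `ω·l·∫₀^l (w² + (w')²) ≤ ω·(a−b)² + (ω·l²/2)·(a² + b²)`; moreover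
`ω·l·∫₀^l (w')² = ω·(a−b)²`. -/
theorem stmt_9 (ω l a b : ℝ) (hω : 0 < ω) (hl : 0 < l) (w : ℝ → ℝ)
    (hw : ∀ t, w t = a + (b - a) / l * t) :
    (ω * l * ∫ t in (0:ℝ)..l, (w t ^ 2 + deriv w t ^ 2) ≤
        ω * (a - b) ^ 2 + ω * l ^ 2 / 2 * (a ^ 2 + b ^ 2)) ∧
      ω * l * ∫ t in (0:ℝ)..l, deriv w t ^ 2 = ω * (a - b) ^ 2 := by
  set c : ℝ := (b - a) / l with hc
  have hwf : w = fun t => a + c * t := funext hw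
  have hderiv : ∀ t : ℝ, deriv w t = c := by
    intro t
    rw [hwf]
    simpa using (((hasDerivAt_id t).const_mul c).const_add a).deriv
  have hcl : c * l = b - a := div_mul_cancel₀ _ hl.ne'
  have hI2 : (∫ t in (0:ℝ)..l, deriv w t ^ 2) = c^2 * l := by
    simp [hderiv, mul_comm]
  have heq : ω * l * ∫ t in (0:ℝ)..l, deriv w t ^ 2 = ω * (a - b) ^ 2 := by
    rw [hI2]
    have : c ^ 2 * l * l = (a - b)^2 := by
      have : (c * l) ^ 2 = (b - a) ^ 2 := by rw [hcl]
      nlinarith [this]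
    nlinarith [this]
  refine ⟨?_, heq⟩
  have hI1 : (∫ t in (0:ℝ)..l, (w t ^ 2 + deriv w t ^ 2)) =
      (a^2 + c^2)*l + (2*a*c)*l^2/2 + c^2*l^3/3 := by
    rw [← poly_integral (a^2 + c^2) (2*a*c) (c^2) l]
    apply intervalIntegral.integral_congr
    intro t _
    simp only [hw, hderiv]
    ring
  rw [hI1]
  have hkey : a^2 + a*(b-a) + (b-a)^2/3 ≤ (a^2 + b^2)/2 := by nlinarith [sq_nonneg (a - b)]
  have hcl3 : c^2 * l^2 = (b-a)^2 := by
    have : (c*l)^2 = (b-a)^2 := by rw [hcl]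
    nlinarith [this]
  have hexp : ω * l * ((a^2 + c^2)*l + (2*a*c)*l^2/2 + c^2*l^3/3)
      = ω * (a-b)^2 + ω * l^2 * (a^2 + a*(b-a) + (b-a)^2/3) := by
    linear_combination ω*hcl3 + ω*l^2*a*hcl + (ω*l^2/3)*hcl3
  rw [hexp]
  have : ω * l^2 * (a^2 + a*(b-a) + (b-a)^2/3) ≤ ω * l^2 / 2 * (a^2 + b^2) := by
    have hpos : 0 < ω * l^2 := by positivity
    nlinarith [mul_le_mul_of_nonneg_left hkey hpos.le]
  linarith
end

section
/- Fix c ∈ ℝ and an integer n ≥ 1. Suppose f : ℝ → ℝ is differentiable and satisfies: f(x) = 0 for x ≤ c + 1/(n+2); f(x) = x − (c + 1/(n+1)) for x ≥ c + 1/n; and for x ∈ (c + 1/(n+2), c + 1/n), f(x) > max(x − (c + 1/(n+1)), 0) and 0 < f'(x) < 1. Then there exists a function g : ℝ → ℝ such that g(0) = 0, |g(s) − g(t)| ≤ |s − t| for all s, t ∈ ℝ (so g is a normal contraction), f(x) = g(max(x − c, 0)) for every x ∈ ℝ, and |g(s) − s| ≤ 1/n for every s ≥ 0. -/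
/-- Each smooth approximation `f = f_n` to the truncation function
`x ↦ max(x − c, 0)` can be written as `f = g ∘ max(· − c, 0)` for a normal contraction
`g` with `g(0) = 0` which is uniformly `1/n`-close to the identity on `[0, ∞)`. -/
theorem stmt_12 (c : ℝ) (n : ℕ) (hn : 1 ≤ n) (f : ℝ → ℝ)
    (hf : Differentiable ℝ f)
    (hf0 : ∀ x, x ≤ c + 1 / ((n : ℝ) + 2) → f x = 0)
    (hf1 : ∀ x, x ≥ c + 1 / (n : ℝ) → f x = x - (c + 1 / ((n : ℝ) + 1)))
    (hfm : ∀ x ∈ Set.Ioo (c + 1 / ((n : ℝ) + 2)) (c + 1 / (n : ℝ)),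
      f x > max (x - (c + 1 / ((n : ℝ) + 1))) 0 ∧ 0 < deriv f x ∧ deriv f x < 1) :
    ∃ g : ℝ → ℝ, g 0 = 0 ∧ (∀ s t, |g s - g t| ≤ |s - t|) ∧
      (∀ x, f x = g (max (x - c) 0)) ∧
      ∀ s, 0 ≤ s → |g s - s| ≤ 1 / (n : ℝ) := by
  have hn0 : (0:ℝ) < n := by exact_mod_cast hn
  have hpos0 : (0:ℝ) < 1 / ((n : ℝ) + 2) := by positivity
  have hpos1 : (0:ℝ) < 1 / (n : ℝ) := by positivity
  have h1p : (0:ℝ) < 1 / ((n : ℝ) + 1) := by positivity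
  have h21 : 1 / ((n : ℝ) + 2) < 1 / (n : ℝ) := by
    apply one_div_lt_one_div_of_lt hn0; linarith
  have h11 : 1 / ((n : ℝ) + 1) ≤ 1 / (n : ℝ) := by
    apply one_div_le_one_div_of_le hn0; linarith
  -- derivative at the left gluing point
  have hd0 : deriv f (c + 1 / ((n : ℝ) + 2)) = 0 := by
    set x := c + 1 / ((n : ℝ) + 2) with hx
    have h1 : HasDerivWithinAt f 0 (Set.Iic x) x :=
      (hasDerivWithinAt_const x _ (0:ℝ)).congr (fun y hy => hf0 y hy) (hf0 x le_rfl)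
    have h2 : HasDerivWithinAt f (deriv f x) (Set.Iic x) x :=
      ((hf x).hasDerivAt).hasDerivWithinAt
    have hu := uniqueDiffOn_Iic x x Set.self_mem_Iic
    rw [← h2.derivWithin hu, h1.derivWithin hu]
  -- derivative at the right gluing point
  have hd1 : deriv f (c + 1 / (n : ℝ)) = 1 := by
    set x := c + 1 / (n : ℝ) with hx
    have h1 : HasDerivWithinAt f 1 (Set.Ici x) x := by
      have h : HasDerivWithinAt (fun y : ℝ => y - (c + 1 / ((n : ℝ) + 1))) 1
          (Set.Ici x) x := ((hasDerivAt_id x).sub_const _).hasDerivWithinAt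
      exact h.congr (fun y hy => hf1 y hy) (hf1 x le_rfl)
    have h2 : HasDerivWithinAt f (deriv f x) (Set.Ici x) x :=
      ((hf x).hasDerivAt).hasDerivWithinAt
    have hu := uniqueDiffOn_Ici x x Set.self_mem_Ici
    rw [← h2.derivWithin hu, h1.derivWithin hu]
  -- bound on the derivative
  have habs : ∀ x, |deriv f x| ≤ 1 := by
    intro x
    rcases lt_trichotomy x (c + 1 / ((n : ℝ) + 2)) with hx | hx | hx
    · have heq : f =ᶠ[nhds x] fun _ => (0:ℝ) := by
        filter_upwards [Iio_mem_nhds hx] with y hy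
        exact hf0 y (le_of_lt hy)
      rw [heq.deriv_eq, deriv_const]; norm_num
    · rw [hx, hd0]; norm_num
    · rcases lt_trichotomy x (c + 1 / (n : ℝ)) with hx' | hx' | hx'
      · obtain ⟨-, h1, h2⟩ := hfm x ⟨hx, hx'⟩
        rw [abs_le]; constructor <;> linarith
      · rw [hx', hd1]; norm_num
      · have heq : f =ᶠ[nhds x] fun y => y - (c + 1 / ((n : ℝ) + 1)) := by
          filter_upwards [Ioi_mem_nhds hx'] with y hy
          exact hf1 y (le_of_lt hy)
        rw [heq.deriv_eq]
        have : deriv (fun y : ℝ => y - (c + 1 / ((n : ℝ) + 1))) x = 1 := by simp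
        rw [this]; norm_num
  have hlip : LipschitzWith 1 f := by
    apply lipschitzWith_of_nnnorm_deriv_le hf
    intro x
    have h := habs x
    rw [← Real.norm_eq_abs] at h
    exact_mod_cast h
  have hdist : ∀ a b, |f a - f b| ≤ |a - b| := by
    intro a b
    have := hlip.dist_le_mul a b
    simpa [Real.dist_eq] using this
  refine ⟨fun s => f (c + max s 0), ?_, ?_, ?_, ?_⟩
  · simp only [max_self, add_zero]
    exact hf0 c (by linarith)
  · intro s t
    calc |f (c + max s 0) - f (c + max t 0)| ≤ |(c + max s 0) - (c + max t 0)| :=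
          hdist _ _
      _ = |max s 0 - max t 0| := by ring_nf
      _ ≤ |s - t| := abs_max_sub_max_le_abs s t 0
  · intro x
    rcases le_or_gt c x with hx | hx
    · have h1 : max (x - c) 0 = x - c := max_eq_left (by linarith)
      simp only [h1]
      rw [show c + (x - c) = x from by ring]
    · have h1 : max (x - c) 0 = 0 := max_eq_right (by linarith)
      simp only [h1, max_self, add_zero]
      rw [hf0 x (by linarith), hf0 c (by linarith)]
  · intro s hs
    simp only [max_eq_left hs]
    rcases le_or_gt s (1 / ((n : ℝ) + 2)) with hs1 | hs1
    · rw [hf0 (c + s) (by linarith)]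
      rw [zero_sub, abs_neg, abs_of_nonneg hs]; linarith
    · rcases le_or_gt (1 / (n : ℝ)) s with hs2 | hs2
      · rw [hf1 (c + s) (by simp only [ge_iff_le]; linarith)]
        have he : c + s - (c + 1 / ((n : ℝ) + 1)) - s = -(1 / ((n : ℝ) + 1)) := by ring
        rw [he, abs_neg, abs_of_pos h1p]; exact h11
      · obtain ⟨hgt, -, -⟩ := hfm (c + s) ⟨by linarith, by linarith⟩
        have hlow : f (c + s) - s > -(1 / (n : ℝ)) := by
          have := le_max_left (c + s - (c + 1 / ((n : ℝ) + 1))) (0:ℝ)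
          linarith
        have hup : f (c + s) - s ≤ 1 / (n : ℝ) := by
          have h0 : f (c + 1 / ((n : ℝ) + 2)) = 0 := hf0 _ le_rfl
          have hd := hdist (c + s) (c + 1 / ((n : ℝ) + 2))
          rw [h0, sub_zero] at hd
          have habs' : |(c + s) - (c + 1 / ((n : ℝ) + 2))| = s - 1 / ((n : ℝ) + 2) := by
            rw [abs_of_nonneg (by linarith)]; ring
          rw [habs'] at hd
          have := (abs_le.mp hd).2
          linarith
        rw [abs_le]; constructor <;> linarith
end
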